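/- Let ρ_A and σ_A be density matrices on a 2^k-dimensional Hilbert space with trace distance T = T(ρ_A, σ_A). Then the change in purity satisfies |tr ρ_A² − tr σ_A²| ≤ 1 − (1 − T)² − T²/(2^k − 1). -/

import Mathlib

open Matrix
open scoped ComplexOrder

/-- The trace (nuclear) norm of a matrix: `‖M‖₁ = tr √(MᴴM)`. -/
noncomputable def traceNorm {n : Type*} [Fintype n] [DecidableEq n] (M : Matrix n n ℂ) : ℝ :=
  (((Matrix.isHermitian_conjTranspose_mul_self M).eigenvectorUnitary : Matrix n n ℂ) *
      diagonal (((↑) : ℝ → ℂ) ∘ Real.sqrt ∘ (Matrix.isHermitian_conjTranspose_mul_self M).eigenvalues) *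
      (star (Matrix.isHermitian_conjTranspose_mul_self M).eigenvectorUnitary : Matrix n n ℂ)).trace.re

section aux

variable {n : Type*} [Fintype n] [DecidableEq n]

lemma psd_diag_nonneg {M : Matrix n n ℂ} (hM : M.PosSemidef) (i : n) :
    (0 : ℂ) ≤ M i i := by
  exact hM.diag_nonneg

lemma conj_conj_mul {U : Matrix n n ℂ} (hU : star U * U = 1)
    (X Y : Matrix n n ℂ) :
    (U * X * star U) * (U * Y * star U) = U * (X * Y) * star U := by
  calc (U * X * star U) * (U * Y * star U)
      = U * (X * ((star U * U) * (Y * star U))) := by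
        simp only [Matrix.mul_assoc]
    _ = U * (X * Y) * star U := by rw [hU, Matrix.one_mul]; simp only [Matrix.mul_assoc]

lemma trace_conj {U : Matrix n n ℂ} (hU : U * star U = 1) (X : Matrix n n ℂ) :
    (star U * X * U).trace = X.trace := by
  rw [Matrix.trace_mul_comm (star U * X) U, ← Matrix.mul_assoc, hU, Matrix.one_mul]

lemma traceNorm_hermitian {M : Matrix n n ℂ} (hM : M.IsHermitian) :
    traceNorm M = ∑ i, |hM.eigenvalues i| := by
  set U : Matrix n n ℂ := (hM.eigenvectorUnitary : Matrix n n ℂ) with hUdef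
  have hU1 : U * star U = 1 := Matrix.mem_unitaryGroup_iff.mp hM.eigenvectorUnitary.2
  have hU2 : star U * U = 1 := Matrix.mem_unitaryGroup_iff'.mp hM.eigenvectorUnitary.2
  set δ := hM.eigenvalues with hδdef
  set A : Matrix n n ℂ := U * Matrix.diagonal (fun i => ((|δ i| : ℝ) : ℂ)) * star U with hAdef
  have hdpsd : (Matrix.diagonal (fun i => ((|δ i| : ℝ) : ℂ))).PosSemidef :=
    Matrix.posSemidef_diagonal_iff.mpr fun i => Complex.zero_le_real.mpr (abs_nonneg _)
  have hApsd : A.PosSemidef := hdpsd.mul_mul_conjTranspose_same U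
  have hsq : A ^ 2 = Mᴴ * M := by
    rw [hM.eq, pow_two, hAdef, conj_conj_mul hU2, Matrix.diagonal_mul_diagonal]
    conv_rhs => rw [hM.spectral_theorem, Unitary.conjStarAlgAut_apply]
    rw [conj_conj_mul hU2, Matrix.diagonal_mul_diagonal]
    have heq : (fun i => ((|δ i| : ℝ) : ℂ) * ((|δ i| : ℝ) : ℂ))
        = fun i => (RCLike.ofReal ∘ δ) i * ((RCLike.ofReal ∘ δ) i) := by
      funext i
      show ((|δ i| : ℝ) : ℂ) * ((|δ i| : ℝ) : ℂ) = ((δ i : ℝ) : ℂ) * ((δ i : ℝ) : ℂ)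
      rw [← Complex.ofReal_mul, ← Complex.ofReal_mul, abs_mul_abs_self]
    rw [heq]
  have hAeq : (Matrix.isHermitian_conjTranspose_mul_self M).cfc Real.sqrt = A := by
    rw [← Matrix.IsHermitian.cfc_eq, hM.eq, ← pow_two, ← cfc_pow_id (R := ℝ) M 2 (show IsSelfAdjoint M from hM)]
    rw [← cfc_comp Real.sqrt (· ^ 2 : ℝ → ℝ) M (show IsSelfAdjoint M from hM)]
    rw [cfc_congr (f := Real.sqrt ∘ fun x : ℝ => x ^ 2) (g := fun x : ℝ => |x|) (fun x _ => Real.sqrt_sq_eq_abs x)]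
    rw [Matrix.IsHermitian.cfc_eq hM, Matrix.IsHermitian.cfc, Unitary.conjStarAlgAut_apply,
      hAdef]
    rfl
  rw [show traceNorm M = ((Matrix.isHermitian_conjTranspose_mul_self M).cfc Real.sqrt).trace.re from by
    rw [Matrix.IsHermitian.cfc, Unitary.conjStarAlgAut_apply]; rfl, hAeq, hAdef]
  rw [Matrix.trace_mul_comm, ← Matrix.mul_assoc, hU2, Matrix.one_mul,
    Matrix.trace_diagonal]
  rw [Complex.re_sum]
  simp

end aux

open Finset in
lemma core_ineq {n : Type*} [Fintype n] [DecidableEq n] [Nonempty n]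
    (a b δ : n → ℝ)
    (ha0 : ∀ i, 0 ≤ a i) (hb0 : ∀ i, 0 ≤ b i)
    (hab : ∀ i, a i - b i = δ i)
    (hsa : ∑ i, a i = 1) (hsb : ∑ i, b i = 1)
    (hd : 2 ≤ (Fintype.card n : ℝ)) :
    ∑ i, δ i * (a i + b i) ≤
      2 * ((∑ i, |δ i|) / 2) - ((∑ i, |δ i|) / 2) ^ 2
        - ((∑ i, |δ i|) / 2) ^ 2 / ((Fintype.card n : ℝ) - 1) := by
  set T : ℝ := (∑ i, |δ i|) / 2 with hT
  have hδsum : ∑ i, δ i = 0 := by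
    have : ∑ i, δ i = (∑ i, a i) - ∑ i, b i := by
      rw [← Finset.sum_sub_distrib]; exact Finset.sum_congr rfl fun i _ => (hab i).symm ▸ rfl
    rw [this, hsa, hsb]; ring
  -- positive part sums to T
  have hpos : ∑ i, max (δ i) 0 = T := by
    have h1 : ∀ i, |δ i| = 2 * max (δ i) 0 - δ i := by
      intro i; rcases le_or_gt 0 (δ i) with h | h
      · rw [abs_of_nonneg h, max_eq_left h]; ring
      · rw [abs_of_neg h, max_eq_right h.le]; ring
    have : ∑ i, |δ i| = 2 * ∑ i, max (δ i) 0 - ∑ i, δ i := by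
      rw [Finset.mul_sum, ← Finset.sum_sub_distrib]
      exact Finset.sum_congr rfl fun i _ => h1 i
    rw [hδsum, sub_zero] at this
    rw [hT, this]; ring
  -- maximum element
  obtain ⟨i₀, -, hi₀⟩ := Finset.exists_max_image (Finset.univ : Finset n) δ univ_nonempty
  set m : ℝ := δ i₀ with hm
  have hm0 : 0 ≤ m := by
    by_contra h
    push_neg at h
    have : ∑ i, δ i < 0 := by
      calc ∑ i, δ i ≤ ∑ _i : n, m := Finset.sum_le_sum fun i _ => hi₀ i (mem_univ i)
        _ = (Fintype.card n : ℝ) * m := by rw [Finset.sum_const]; simp [mul_comm]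
        _ < 0 := mul_neg_of_pos_of_neg (by linarith) h
    linarith [hδsum]
  have hmT : m ≤ T := by
    calc m ≤ max (δ i₀) 0 := le_max_left _ _
      _ ≤ ∑ i, max (δ i) 0 :=
        Finset.single_le_sum (f := fun i => max (δ i) 0) (fun i _ => le_max_right _ _) (mem_univ i₀)
      _ = T := hpos
  have hT1 : T ≤ 1 := by
    rw [← hpos, ← hsa]
    exact Finset.sum_le_sum fun i _ => max_le (by rw [← hab i]; linarith [hb0 i]) (ha0 i)
  have hT0 : 0 ≤ T := le_trans hm0 hmT
  -- sum δ a ≤ m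
  have hδa : ∑ i, δ i * a i ≤ m := by
    calc ∑ i, δ i * a i ≤ ∑ i, m * a i := by
          refine Finset.sum_le_sum fun i _ => mul_le_mul_of_nonneg_right (hi₀ i (mem_univ i)) (ha0 i)
      _ = m := by rw [← Finset.mul_sum, hsa, mul_one]
  -- identity
  have hid : ∑ i, δ i * (a i + b i) = 2 * ∑ i, δ i * a i - ∑ i, δ i ^ 2 := by
    rw [Finset.mul_sum, ← Finset.sum_sub_distrib]
    refine Finset.sum_congr rfl fun i _ => ?_
    have hb : b i = a i - δ i := by linarith [hab i]
    rw [hb]; ring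
  -- Cauchy–Schwarz on the rest
  set c : ℝ := (Fintype.card n : ℝ) - 1 with hc
  have hc1 : (1 : ℝ) ≤ c := by rw [hc]; linarith
  have hc0 : (0 : ℝ) < c := by linarith
  have hsq : m ^ 2 + (2 * T - m) ^ 2 / c ≤ ∑ i, δ i ^ 2 := by
    have hsplit : ∑ i, δ i ^ 2 = δ i₀ ^ 2 + ∑ i ∈ univ.erase i₀, δ i ^ 2 := by
      rw [← Finset.sum_erase_add _ _ (mem_univ i₀)]; ring
    have habs : ∑ i ∈ univ.erase i₀, |δ i| = 2 * T - m := by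
      have h := Finset.sum_erase_add univ (fun i => |δ i|) (mem_univ i₀)
      have habs0 : |δ i₀| = m := abs_of_nonneg hm0
      have hTs : ∑ i, |δ i| = 2 * T := by rw [hT]; ring
      rw [habs0, hTs] at h
      linarith
    have hcs : (∑ i ∈ univ.erase i₀, |δ i|) ^ 2
        ≤ (univ.erase i₀).card * ∑ i ∈ univ.erase i₀, |δ i| ^ 2 :=
      sq_sum_le_card_mul_sum_sq
    have hcard : ((univ.erase i₀).card : ℝ) = c := by
      rw [Finset.card_erase_of_mem (mem_univ i₀)]
      rw [hc]
      have h2 : 1 ≤ Fintype.card n := Fintype.card_pos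
      rw [Finset.card_univ, Nat.cast_sub h2, Nat.cast_one]
    have h3 : (2 * T - m) ^ 2 ≤ c * ∑ i ∈ univ.erase i₀, δ i ^ 2 := by
      rw [← habs]
      calc (∑ i ∈ univ.erase i₀, |δ i|) ^ 2
          ≤ ((univ.erase i₀).card : ℝ) * ∑ i ∈ univ.erase i₀, |δ i| ^ 2 := hcs
        _ = c * ∑ i ∈ univ.erase i₀, δ i ^ 2 := by rw [hcard]; congr 1; exact Finset.sum_congr rfl fun i _ => sq_abs _
    have h4 : (2 * T - m) ^ 2 / c ≤ ∑ i ∈ univ.erase i₀, δ i ^ 2 :=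
      (div_le_iff₀ hc0).mpr (by linarith [h3])
    rw [hsplit, ← hm]
    linarith
  -- combine
  have key : ∑ i, δ i * (a i + b i) ≤ 2 * m - m ^ 2 - (2 * T - m) ^ 2 / c := by
    rw [hid]; linarith
  have hmono : 2 * m - m ^ 2 - (2 * T - m) ^ 2 / c ≤ 2 * T - T ^ 2 - T ^ 2 / c := by
    have h1 : 0 ≤ (T - m) * (2 - T - m) := by nlinarith
    have h2 : 0 ≤ ((2 * T - m) ^ 2 - T ^ 2) / c := by
      apply div_nonneg _ hc0.le; nlinarith
    have h3 : (2 * T - m) ^ 2 / c = T ^ 2 / c + ((2 * T - m) ^ 2 - T ^ 2) / c := by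
      rw [← add_div]; ring_nf
    linarith
  calc ∑ i, δ i * (a i + b i) ≤ 2 * m - m ^ 2 - (2 * T - m) ^ 2 / c := key
    _ ≤ 2 * T - T ^ 2 - T ^ 2 / c := hmono

open Matrix

/-- for density matrices `ρ_A, σ_A` on a `2^k`-dimensional Hilbert space with trace
distance `T = ½‖ρ_A − σ_A‖₁`, the purity change satisfies
`|tr ρ_A² − tr σ_A²| ≤ 1 − (1 − T)² − T²/(2^k − 1)`. -/
theorem purity_continuity_bound (k : ℕ) (hk : 1 ≤ k)
    (ρ σ : Matrix (Fin (2 ^ k)) (Fin (2 ^ k)) ℂ)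
    (hρ : ρ.PosSemidef) (hρ1 : ρ.trace = 1) (hσ : σ.PosSemidef) (hσ1 : σ.trace = 1) :
    |((ρ * ρ).trace).re - ((σ * σ).trace).re|
      ≤ 1 - (1 - traceNorm (ρ - σ) / 2) ^ 2
        - (traceNorm (ρ - σ) / 2) ^ 2 / (2 ^ k - 1) := by
  haveI : Nonempty (Fin (2 ^ k)) := ⟨⟨0, by positivity⟩⟩
  have hΔ : (ρ - σ).IsHermitian := hρ.1.sub hσ.1
  set U : Matrix (Fin (2 ^ k)) (Fin (2 ^ k)) ℂ :=
    (hΔ.eigenvectorUnitary : Matrix (Fin (2 ^ k)) (Fin (2 ^ k)) ℂ) with hUdef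
  have hU1 : U * star U = 1 := Matrix.mem_unitaryGroup_iff.mp hΔ.eigenvectorUnitary.2
  have hU2 : star U * U = 1 := Matrix.mem_unitaryGroup_iff'.mp hΔ.eigenvectorUnitary.2
  set δ := hΔ.eigenvalues with hδdef
  -- diagonalization
  have hdiag : star U * (ρ - σ) * U = Matrix.diagonal (RCLike.ofReal ∘ δ) := by
    conv_lhs => rw [hΔ.spectral_theorem, Unitary.conjStarAlgAut_apply]
    simp only [Matrix.mul_assoc]
    rw [hU2, Matrix.mul_one, ← Matrix.mul_assoc, hU2, Matrix.one_mul]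
  set P : Matrix (Fin (2 ^ k)) (Fin (2 ^ k)) ℂ := star U * ρ * U with hPdef
  set Q : Matrix (Fin (2 ^ k)) (Fin (2 ^ k)) ℂ := star U * σ * U with hQdef
  have hPpsd : P.PosSemidef := by
    exact hρ.conjTranspose_mul_mul_same U
  have hQpsd : Q.PosSemidef := by
    exact hσ.conjTranspose_mul_mul_same U
  set a : Fin (2 ^ k) → ℝ := fun i => (P i i).re with hadef
  set b : Fin (2 ^ k) → ℝ := fun i => (Q i i).re with hbdef
  have ha0 : ∀ i, 0 ≤ a i := fun i => (Complex.le_def.mp (psd_diag_nonneg hPpsd i)).1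
  have hb0 : ∀ i, 0 ≤ b i := fun i => (Complex.le_def.mp (psd_diag_nonneg hQpsd i)).1
  have hPQ : P - Q = Matrix.diagonal (RCLike.ofReal ∘ δ) := by
    rw [← hdiag, hPdef, hQdef, Matrix.mul_sub, Matrix.sub_mul]
  have hab : ∀ i, a i - b i = δ i := by
    intro i
    have h := congrFun (congrFun hPQ i) i
    simp only [Matrix.sub_apply, Matrix.diagonal_apply_eq, Function.comp_apply] at h
    have := congrArg Complex.re h
    simpa [hadef, hbdef] using this
  have hsa : ∑ i, a i = 1 := by
    have h : P.trace = 1 := by rw [hPdef, trace_conj hU1, hρ1]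
    have := congrArg Complex.re h
    rw [Matrix.trace] at this
    simpa [Matrix.diag, Complex.re_sum] using this
  have hsb : ∑ i, b i = 1 := by
    have h : Q.trace = 1 := by rw [hQdef, trace_conj hU1, hσ1]
    have := congrArg Complex.re h
    rw [Matrix.trace] at this
    simpa [Matrix.diag, Complex.re_sum] using this
  -- purity difference
  have hpur : ((ρ * ρ).trace).re - ((σ * σ).trace).re = ∑ i, δ i * (a i + b i) := by
    have h1 : (ρ - σ) * (ρ + σ) = ρ * ρ + ρ * σ - σ * ρ - σ * σ := by noncomm_ring
    have h2 : ((ρ - σ) * (ρ + σ)).trace = (ρ * ρ).trace - (σ * σ).trace := by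
      rw [h1, Matrix.trace_sub, Matrix.trace_sub, Matrix.trace_add,
        Matrix.trace_mul_comm ρ σ]
      ring
    have h3 : ((ρ - σ) * (ρ + σ)).trace
        = (Matrix.diagonal (RCLike.ofReal ∘ δ) * (P + Q)).trace := by
      have hsum : P + Q = star U * (ρ + σ) * U := by
        rw [hPdef, hQdef, Matrix.mul_add, Matrix.add_mul]
      rw [hsum, ← hdiag]
      calc ((ρ - σ) * (ρ + σ)).trace
          = (star U * ((ρ - σ) * (ρ + σ)) * U).trace := by rw [trace_conj hU1]
        _ = (star U * (ρ - σ) * (U * (star U * (ρ + σ) * U))).trace := by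
            simp only [Matrix.mul_assoc]
            rw [← Matrix.mul_assoc U (star U), hU1, Matrix.one_mul]
        _ = ((star U * (ρ - σ) * U) * (star U * (ρ + σ) * U)).trace := by
            simp only [Matrix.mul_assoc]
    have h4 : (Matrix.diagonal (RCLike.ofReal ∘ δ) * (P + Q)).trace
        = ∑ i, (δ i : ℂ) * (P i i + Q i i) := by
      rw [Matrix.trace]
      simp [Matrix.diag, Matrix.diagonal_mul]
    have h5 : (ρ * ρ).trace - (σ * σ).trace = ∑ i, (δ i : ℂ) * (P i i + Q i i) := by
      rw [← h4, ← h3, h2]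
    have := congrArg Complex.re h5
    rw [Complex.sub_re, Complex.re_sum] at this
    rw [this]
    refine Finset.sum_congr rfl fun i _ => ?_
    simp [hadef, hbdef, Complex.mul_re, Complex.add_re, Complex.add_im]
  -- trace norm value
  have htn : traceNorm (ρ - σ) = ∑ i, |δ i| := traceNorm_hermitian hΔ
  have hcard : (Fintype.card (Fin (2 ^ k)) : ℝ) = (2 : ℝ) ^ k := by
    rw [Fintype.card_fin]
    push_cast
    ring
  have hd : 2 ≤ (Fintype.card (Fin (2 ^ k)) : ℝ) := by
    rw [hcard]
    calc (2 : ℝ) = 2 ^ 1 := by ring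
      _ ≤ 2 ^ k := by
        apply pow_le_pow_right₀ (by norm_num) hk
  have h₁ := core_ineq a b δ ha0 hb0 hab hsa hsb hd
  have h₂ := core_ineq b a (fun i => -δ i) hb0 ha0
    (fun i => by show b i - a i = -δ i; have := hab i; linarith) hsb hsa hd
  rw [hpur, htn]
  rw [abs_le]
  constructor
  · have e1 : ∑ i, (fun i => -δ i) i * (b i + a i) = -∑ i, δ i * (a i + b i) := by
      rw [← Finset.sum_neg_distrib]
      exact Finset.sum_congr rfl fun i _ => by ring
    have e2 : ∑ i, |(fun i => -δ i) i| = ∑ i, |δ i| := by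
      exact Finset.sum_congr rfl fun i _ => abs_neg _
    rw [e1, e2] at h₂
    rw [hcard] at h₂
    nlinarith [h₂]
  · rw [hcard] at h₁
    nlinarith [h₁]
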